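/- Let I be a finite index type with a grading g : I → ℤ/2, let d ∈ ℤ/2, let θ be an integer, and let M, N be complex matrices indexed by I × I which are homogeneous of degree d, i.e. M_{αβ} = 0 and N_{αβ} = 0 whenever g(α) + g(β) ≠ d. Suppose M^† = (−1)^{(θ−1)·d} · N, where † denotes conjugate transpose and the sign (−1)^{(θ−1)·d} equals −1 exactly when (θ−1)·d = 1 in ℤ/2. Then (−M^{sT})^† = (−1)^{θ·d} · (−N^{sT}), where the supertranspose of a degree-d homogeneous matrix A is defined by (A^{sT})_{αβ} = (−1)^{d·g(β)} A_{βα}. (This is the computation showing that the dual of a type 1 unitary representation is type 2 unitary and vice versa.) -/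

import Mathlib

open Matrix

noncomputable section

/-- The sign `(−1)^x` for `x ∈ ℤ/2`: it is `−1` exactly when `x = 1`. -/
def zsign (x : ZMod 2) : ℂ := if x = 1 then -1 else 1

/-- The supertranspose of a matrix, relative to a grading `g : I → ℤ/2` and a degree
`d ∈ ℤ/2`: `(A^{sT})_{αβ} = (−1)^{d·g(β)} A_{βα}`. -/
def superT {I : Type*} (g : I → ZMod 2) (d : ZMod 2) (A : Matrix I I ℂ) : Matrix I I ℂ :=
  Matrix.of fun α β => zsign (d * g β) * A β α

/-- if `M, N` are homogeneous of degree `d` and `M^† = (−1)^{(θ−1)d} N`,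
then `(−M^{sT})^† = (−1)^{θd} (−N^{sT})`: the dual of a type 1 unitary representation
is type 2 unitary and vice versa. -/
theorem statement4 {I : Type*} [Fintype I] (g : I → ZMod 2) (d : ZMod 2) (θ : ℤ)
    (M N : Matrix I I ℂ)
    (hM : ∀ α β, g α + g β ≠ d → M α β = 0)
    (hN : ∀ α β, g α + g β ≠ d → N α β = 0)
    (h : Mᴴ = zsign (((θ - 1 : ℤ) : ZMod 2) * d) • N) :
    (-(superT g d M))ᴴ = zsign (((θ : ℤ) : ZMod 2) * d) • (-(superT g d N)) := by
  have zadd : ∀ x y : ZMod 2, zsign (x + y) = zsign x * zsign y := by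
    intro x y; rcases (show ∀ z : ZMod 2, z = 0 ∨ z = 1 by decide) x with rfl | rfl <;> rcases (show ∀ z : ZMod 2, z = 0 ∨ z = 1 by decide) y with rfl | rfl <;> simp [zsign, show (0:ZMod 2) ≠ 1 by decide, show (1:ZMod 2) + 1 = 0 by decide] <;> norm_num
  have zconj : ∀ x : ZMod 2, star (zsign x) = zsign x := by
    intro x; rcases (show ∀ z : ZMod 2, z = 0 ∨ z = 1 by decide) x with rfl | rfl <;> simp [zsign, show (0:ZMod 2) ≠ 1 by decide, show (1:ZMod 2) + 1 = 0 by decide]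
  ext α β
  have hh := congrFun (congrFun h β) α
  simp only [Matrix.conjTranspose_apply, Matrix.smul_apply, smul_eq_mul] at hh
  simp only [Matrix.conjTranspose_apply, Matrix.neg_apply, Matrix.smul_apply, smul_eq_mul,
    superT, Matrix.of_apply]
  rw [star_neg, star_mul', zconj, hh]
  by_cases hba : g β + g α = d
  · have hθ : ((θ - 1 : ℤ) : ZMod 2) = ((θ : ℤ) : ZMod 2) + 1 := by
      push_cast
      have h1 : (-1 : ZMod 2) = 1 := by decide
      rw [sub_eq_add_neg, h1]
    have hd : d * g α + ((θ - 1 : ℤ) : ZMod 2) * d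
        = ((θ : ℤ) : ZMod 2) * d + d * g β := by
      rw [hθ, ← hba]
      have key : ∀ a b t : ZMod 2,
          (b + a) * a + (t + 1) * (b + a) = t * (b + a) + (b + a) * b := by decide
      exact key _ _ _
    rw [← mul_assoc, ← zadd, hd, zadd, mul_assoc]; ring
  · rw [hN β α hba]; ring
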